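/- For vectors a, g in R^n with a ≠ 0 and g ≠ 0, the projection of g onto the hypercone C_a^Δ = {x : x = 0 or ⟨a,x⟩ ≥ ‖a‖‖x‖ cos(π/2 − Δ)} lies in the two-dimensional subspace spanned by a and g; that is, the minimizer of ‖x − g‖ over x ∈ C_a^Δ can be written as a linear combination of a and g. -/

import Mathlib

open Real RealInnerProductSpace

/-- The projection of `g` onto the hypercone
`C_a^Δ = {x : x = 0 ∨ ⟪a,x⟫ ≥ ‖a‖‖x‖ cos(π/2 − Δ)}` lies in the plane spanned by `a` and `g`. -/
theorem cone_projection_planar {n : ℕ} (a g p : EuclideanSpace ℝ (Fin n)) (Δ : ℝ)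
    (ha : a ≠ 0) (hg : g ≠ 0) (hΔ0 : 0 ≤ Δ) (hΔ1 : Δ ≤ π / 2)
    (C : Set (EuclideanSpace ℝ (Fin n)))
    (hC : C = {x | x = 0 ∨ ⟪a, x⟫ ≥ ‖a‖ * ‖x‖ * Real.cos (π / 2 - Δ)})
    (hpC : p ∈ C) (hmin : ∀ x ∈ C, ‖p - g‖ ≤ ‖x - g‖) :
    ∃ c d : ℝ, p = c • a + d • g := by
  subst hC
  set K : Submodule ℝ (EuclideanSpace ℝ (Fin n)) :=
    Submodule.span ℝ ({a, g} : Set (EuclideanSpace ℝ (Fin n))) with hKdef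
  set q : EuclideanSpace ℝ (Fin n) := (K.orthogonalProjectionOnto p : EuclideanSpace ℝ (Fin n))
    with hqdef
  have haK : a ∈ K := Submodule.subset_span (by simp)
  have hgK : g ∈ K := Submodule.subset_span (by simp)
  have hqK : q ∈ K := (K.orthogonalProjectionOnto p).2
  have horth : p - q ∈ Kᗮ := K.sub_starProjection_mem_orthogonal p
  have hinner : ∀ v ∈ K, ⟪v, p - q⟫ = 0 := fun v hv =>
    (Submodule.mem_orthogonal K (p - q)).mp horth v hv
  have hap : ⟪a, q⟫ = ⟪a, p⟫ := by
    have := hinner a haK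
    rw [inner_sub_right] at this
    linarith
  have hsin : 0 ≤ Real.sin Δ := Real.sin_nonneg_of_nonneg_of_le_pi hΔ0 (by linarith [Real.pi_pos])
  have hcos : Real.cos (π / 2 - Δ) = Real.sin Δ := Real.cos_pi_div_two_sub Δ
  -- ‖q‖ ≤ ‖p‖
  have hpyth : ‖p‖ ^ 2 = ‖q‖ ^ 2 + ‖p - q‖ ^ 2 := by
    have h0 : ⟪q, p - q⟫ = 0 := hinner q hqK
    have h2 : q + (p - q) = p := by abel
    conv_lhs => rw [← h2]
    rw [norm_add_sq_real, h0]; ring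
  have hnq : ‖q‖ ≤ ‖p‖ := by
    have h1 : ‖q‖ ^ 2 ≤ ‖p‖ ^ 2 := by nlinarith [sq_nonneg ‖p - q‖]
    nlinarith [norm_nonneg p, norm_nonneg q]
  -- q ∈ C
  have hqC : q ∈ {x | x = 0 ∨ ⟪a, x⟫ ≥ ‖a‖ * ‖x‖ * Real.cos (π / 2 - Δ)} := by
    rcases hpC with hp0 | hpineq
    · left
      rw [hqdef, hp0]
      simp
    · right
      rw [hap, hcos]
      rw [hcos] at hpineq
      have : ‖a‖ * ‖q‖ * Real.sin Δ ≤ ‖a‖ * ‖p‖ * Real.sin Δ := by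
        apply mul_le_mul_of_nonneg_right _ hsin
        exact mul_le_mul_of_nonneg_left hnq (norm_nonneg a)
      linarith
  -- distance comparison
  have hdist : ‖p - g‖ ^ 2 = ‖q - g‖ ^ 2 + ‖p - q‖ ^ 2 := by
    have h0 : ⟪q - g, p - q⟫ = 0 := hinner _ (Submodule.sub_mem K hqK hgK)
    have h2 : (q - g) + (p - q) = p - g := by abel
    conv_lhs => rw [← h2]
    rw [norm_add_sq_real, h0]; ring
  have hle : ‖p - g‖ ≤ ‖q - g‖ := hmin q hqC
  have hpq : ‖p - q‖ = 0 := by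
    have h1 : ‖p - g‖ ^ 2 ≤ ‖q - g‖ ^ 2 := by
      nlinarith [norm_nonneg (q - g), norm_nonneg (p - g)]
    have h2 : ‖p - q‖ ^ 2 ≤ 0 := by linarith
    have h3 : ‖p - q‖ ^ 2 = 0 := le_antisymm h2 (sq_nonneg _)
    nlinarith [norm_nonneg (p - q)]
  have : p = q := by
    have := norm_eq_zero.mp hpq
    have := sub_eq_zero.mp this
    exact this
  rw [this]
  rcases Submodule.mem_span_pair.mp hqK with ⟨c, d, hcd⟩
  exact ⟨c, d, hcd.symm⟩
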